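/- Let G be a finite graph with Laplacian L having spectrum 0 = λ₀ < λ₁ ≤ ... ≤ λ_{|G|−1} and orthonormal eigenbasis (φⱼ). Then f belongs to the Paley–Wiener space E_ω(G) = range of the spectral projection 1_{[0,ω]}(L) if and only if for every t > 0 the Bernstein inequality ‖Lᵗ f‖ ≤ ωᵗ ‖f‖ holds. -/

import Mathlib

open Finset

/-- Weighted gradient norm squared: `‖∇f‖² = (1/2) Σ_{u,v} |f(u)−f(v)|² w(u,v)`. -/
noncomputable def gradSq {V : Type*} [Fintype V] (w : V → V → ℝ) (f : V → ℂ) : ℝ :=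
  (1 / 2) * ∑ u, ∑ v, ‖f u - f v‖ ^ 2 * w u v

/-- Weighted graph Laplacian: `(Lf)(v) = Σ_u (f(v) − f(u)) w(v,u)`. -/
noncomputable def lap {V : Type*} [Fintype V] (w : V → V → ℝ) (f : V → ℂ) : V → ℂ :=
  fun v => ∑ u, (f v - f u) * ((w v u : ℝ) : ℂ)

/-- Inner product on `ℓ²(G)`. -/
noncomputable def ip {V : Type*} [Fintype V] (ψ f : V → ℂ) : ℂ :=
  ∑ v, (starRingEnd ℂ) (ψ v) * f v

/-- Squared `ℓ²(G)` norm. -/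
noncomputable def nsq {V : Type*} [Fintype V] (f : V → ℂ) : ℝ :=
  ∑ v, ‖f v‖ ^ 2

/-- The graph with weight `w` is connected. -/
def GraphConnected {V : Type*} [Fintype V] (w : V → V → ℝ) : Prop :=
  ∀ u v : V, Relation.ReflTransGen (fun a b => 0 < w a b) u v

/-- `lam1` is the first (smallest) nonzero eigenvalue of the Laplacian of `(V, w)`. -/
def IsFirstNonzeroEig {V : Type*} [Fintype V] (w : V → V → ℝ) (lam1 : ℝ) : Prop :=
  0 < lam1 ∧
  (∃ φ : V → ℂ, φ ≠ 0 ∧ lap w φ = fun v => (lam1 : ℂ) * φ v) ∧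
  ∀ (μ : ℝ) (φ : V → ℂ), φ ≠ 0 → (lap w φ = fun v => (μ : ℂ) * φ v) → μ = 0 ∨ lam1 ≤ μ

/-- Bernstein characterization of Paley–Wiener spaces: `f ∈ E_ω(G)` (the span of
eigenfunctions with eigenvalue `≤ ω`) iff `‖Lᵗf‖ ≤ ωᵗ‖f‖` for all `t > 0`, where `Lᵗ` is given
by the spectral functional calculus. -/
lemma nsq_nonneg {V : Type*} [Fintype V] (f : V → ℂ) : 0 ≤ nsq f :=
  Finset.sum_nonneg fun v _ => by positivity

/-- `ip ψ ·` as a linear map. -/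
noncomputable def ipL {V : Type*} [Fintype V] (ψ : V → ℂ) : (V → ℂ) →ₗ[ℂ] ℂ where
  toFun f := ip ψ f
  map_add' f g := by simp [ip, Finset.sum_add_distrib, mul_add]
  map_smul' c f := by
    simp only [ip, Pi.smul_apply, smul_eq_mul, RingHom.id_apply, Finset.mul_sum]
    exact Finset.sum_congr rfl fun x _ => by ring

lemma parseval {V : Type*} [Fintype V] {n : ℕ} (φ : Fin n → V → ℂ)
    (hON : ∀ k l, ip (φ k) (φ l) = if k = l then 1 else 0) (a : Fin n → ℂ) :
    nsq (fun v => ∑ k, a k * φ k v) = ∑ k, ‖a k‖ ^ 2 := by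
  have key : (∑ v, (starRingEnd ℂ) (∑ k, a k * φ k v) * (∑ l, a l * φ l v))
      = ∑ k, (starRingEnd ℂ) (a k) * a k := by
    have h1 : ∀ v : V, (starRingEnd ℂ) (∑ k, a k * φ k v) * (∑ l, a l * φ l v)
        = ∑ k, ∑ l, ((starRingEnd ℂ) (a k) * a l) * ((starRingEnd ℂ) (φ k v) * φ l v) := by
      intro v
      rw [map_sum, Finset.sum_mul_sum]
      exact Finset.sum_congr rfl fun k _ => Finset.sum_congr rfl fun l _ => by
        rw [map_mul]; ring
    simp_rw [h1]
    rw [Finset.sum_comm]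
    refine Finset.sum_congr rfl fun k _ => ?_
    rw [Finset.sum_comm]
    have h2 : ∀ l, (∑ v, ((starRingEnd ℂ) (a k) * a l) * ((starRingEnd ℂ) (φ k v) * φ l v))
        = ((starRingEnd ℂ) (a k) * a l) * ip (φ k) (φ l) := by
      intro l; rw [ip, Finset.mul_sum]
    simp_rw [h2, hON]
    simp
  have := congrArg Complex.re key
  simp only [Complex.re_sum] at this
  unfold nsq
  convert this using 2 with v <;> rename_i x _ <;>
    · rw [RCLike.conj_mul]; norm_cast

theorem stmt6 {V : Type*} [Fintype V] (w : V → V → ℝ)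
    (hsymm : ∀ u v, w u v = w v u) (hnn : ∀ u v, 0 ≤ w u v) (hdiag : ∀ v, w v v = 0)
    (n : ℕ) (hn : n = Fintype.card V)
    (φ : Fin n → V → ℂ) (lam : Fin n → ℝ)
    (hON : ∀ k l, ip (φ k) (φ l) = if k = l then 1 else 0)
    (hcomplete : ∀ f : V → ℂ, f = fun v => ∑ k, ip (φ k) f * φ k v)
    (heig : ∀ k, lap w (φ k) = fun v => ((lam k : ℝ) : ℂ) * φ k v)
    (hlnn : ∀ k, 0 ≤ lam k)
    (ω : ℝ) (hω : 0 ≤ ω) (f : V → ℂ) :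
    f ∈ Submodule.span ℂ {g : V → ℂ | ∃ k, lam k ≤ ω ∧ g = φ k} ↔
      ∀ t : ℝ, 0 < t →
        Real.sqrt (nsq (fun v => ∑ k, ((lam k ^ t : ℝ) : ℂ) * ip (φ k) f * φ k v)) ≤
          ω ^ t * Real.sqrt (nsq f) := by
  set c : Fin n → ℂ := fun k => ip (φ k) f with hc
  -- Parseval for f
  have hfP : nsq f = ∑ k, ‖c k‖ ^ 2 := by
    rw [hcomplete f]; exact parseval φ hON c
  -- Parseval for L^t f
  have hgP : ∀ t : ℝ, nsq (fun v => ∑ k, ((lam k ^ t : ℝ) : ℂ) * ip (φ k) f * φ k v)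
      = ∑ k, (lam k ^ t) ^ 2 * ‖c k‖ ^ 2 := by
    intro t
    have := parseval φ hON (fun k => ((lam k ^ t : ℝ) : ℂ) * c k)
    simp_rw [mul_assoc] at this ⊢
    rw [this]
    refine Finset.sum_congr rfl fun k _ => ?_
    rw [norm_mul, mul_pow, Complex.norm_real, Real.norm_eq_abs,
      abs_of_nonneg (Real.rpow_nonneg (hlnn k) t)]
  constructor
  · -- forward
    intro hf t ht
    have hzero : ∀ k, ω < lam k → c k = 0 := by
      intro k hk
      have hle : Submodule.span ℂ {g : V → ℂ | ∃ k, lam k ≤ ω ∧ g = φ k}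
          ≤ LinearMap.ker (ipL (φ k)) := by
        rw [Submodule.span_le]
        rintro g ⟨l, hl, rfl⟩
        have : l ≠ k := by rintro rfl; exact absurd hl (not_le.2 hk)
        simp only [SetLike.mem_coe, LinearMap.mem_ker]
        show ip (φ k) (φ l) = 0
        rw [hON]; simp [Ne.symm this]
      exact hle hf
    have hbound : nsq (fun v => ∑ k, ((lam k ^ t : ℝ) : ℂ) * ip (φ k) f * φ k v)
        ≤ (ω ^ t) ^ 2 * nsq f := by
      rw [hgP t, hfP, Finset.mul_sum]
      refine Finset.sum_le_sum fun k _ => ?_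
      by_cases hk : lam k ≤ ω
      · have h1 : lam k ^ t ≤ ω ^ t := Real.rpow_le_rpow (hlnn k) hk ht.le
        have h2 : (lam k ^ t) ^ 2 ≤ (ω ^ t) ^ 2 :=
          pow_le_pow_left₀ (Real.rpow_nonneg (hlnn k) t) h1 2
        exact mul_le_mul_of_nonneg_right h2 (by positivity)
      · rw [hzero k (not_le.1 hk)]; simp
    calc Real.sqrt (nsq (fun v => ∑ k, ((lam k ^ t : ℝ) : ℂ) * ip (φ k) f * φ k v))
        ≤ Real.sqrt ((ω ^ t) ^ 2 * nsq f) := Real.sqrt_le_sqrt hbound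
      _ = ω ^ t * Real.sqrt (nsq f) := by
          rw [Real.sqrt_mul (sq_nonneg _), Real.sqrt_sq (Real.rpow_nonneg hω t)]
  · -- backward
    intro hB
    have hzero : ∀ k, ω < lam k → c k = 0 := by
      intro k hk
      by_contra hck
      have hck2 : 0 < ‖c k‖ ^ 2 := pow_pos (norm_pos_iff.2 hck) 2
      have hkey : ∀ t : ℝ, 0 < t → (lam k ^ t) ^ 2 * ‖c k‖ ^ 2 ≤ (ω ^ t) ^ 2 * nsq f := by
        intro t ht
        have h1 := hB t ht
        have h2 : nsq (fun v => ∑ j, ((lam j ^ t : ℝ) : ℂ) * ip (φ j) f * φ j v)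
            ≤ (ω ^ t) ^ 2 * nsq f := by
          have := mul_le_mul h1 h1 (Real.sqrt_nonneg _)
            (mul_nonneg (Real.rpow_nonneg hω t) (Real.sqrt_nonneg _))
          rwa [Real.mul_self_sqrt (nsq_nonneg _),
            mul_mul_mul_comm, ← pow_two, Real.mul_self_sqrt (nsq_nonneg f)] at this
        refine le_trans ?_ h2
        rw [hgP t]
        exact Finset.single_le_sum (f := fun j => (lam j ^ t) ^ 2 * ‖c j‖ ^ 2)
          (fun j _ => by positivity) (Finset.mem_univ k)
      have hlk : 0 < lam k := lt_of_le_of_lt hω hk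
      -- ω = 0 case
      rcases eq_or_lt_of_le hω with hω0 | hωpos
      · have h := hkey 1 one_pos
        rw [← hω0, Real.rpow_one, Real.zero_rpow one_ne_zero] at h
        nlinarith [mul_pos (pow_pos hlk 2) hck2, nsq_nonneg f]
      · -- ω > 0
        set r := lam k / ω with hr
        have hr1 : 1 < r := (one_lt_div hωpos).2 hk
        obtain ⟨m, hm⟩ := pow_unbounded_of_one_lt ((nsq f) / ‖c k‖ ^ 2) hr1
        have ht : (0:ℝ) < ((m + 1 : ℕ) : ℝ) := by positivity
        have hmain := hkey ((m + 1 : ℕ) : ℝ) ht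
        rw [Real.rpow_natCast, Real.rpow_natCast] at hmain
        set A := lam k ^ (m + 1) with hA
        set B := ω ^ (m + 1) with hB
        have hBpos : 0 < B := pow_pos hωpos _
        have hAB : B < A := pow_lt_pow_left₀ hk hω (Nat.succ_ne_zero m)
        have hrm : (nsq f) / ‖c k‖ ^ 2 < r ^ (m + 1) :=
          hm.trans_le (pow_le_pow_right₀ hr1.le (Nat.le_succ m))
        have hrdiv : r ^ (m + 1) = A / B := by rw [hr, div_pow]
        rw [hrdiv, div_lt_div_iff₀ hck2 hBpos] at hrm
        -- hrm : nsq f * B < A * ‖c k‖ ^ 2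
        nlinarith [hmain, hrm, hBpos, hAB, hck2, mul_lt_mul_of_pos_left hrm hBpos,
          mul_pos (mul_pos (sub_pos.2 hAB) (hBpos.trans hAB)) hck2]
    -- now f ∈ span
    have hrep : f = ∑ k, c k • φ k := by
      rw [hcomplete f]
      funext v
      simp [Finset.sum_apply]
      rfl
    rw [hrep]
    refine Submodule.sum_mem _ fun k _ => ?_
    by_cases hk : lam k ≤ ω
    · exact Submodule.smul_mem _ _ (Submodule.subset_span ⟨k, hk, rfl⟩)
    · rw [hzero k (not_le.1 hk), zero_smul]; exact Submodule.zero_mem _
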